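/- Let d ≥ 2 be an integer, θ ∈ ℝ^d with θ ≠ 0, set λ = ‖θ‖, and let X have Lebesgue density x ↦ f(‖x−θ‖²) on ℝ^d. Let ρ : [0,∞) → [0,∞) be measurable, ω ∈ [0,1), and h : (0,∞) → ℝ be measurable, and consider the orthogonally equivariant estimator δ(x) = h(‖x‖²) x. Then, provided the risk is finite, ∫_{ℝ^d} [ ω ρ(‖δ(x)−x‖²) + (1−ω) ρ(‖δ(x)−θ‖²) ] f(‖x−θ‖²) dx = ∫_0^∞ ∫_{−1}^{1} [ ω ρ( (h(w)−1)² w ) + (1−ω) ρ( λ² + h(w)² w − 2 λ t w^{1/2} h(w) ) ] ψ(t,w) dt dw, where ψ(t,w) = (π^{(d−1)/2}/Γ((d−1)/2)) w^{d/2−1} (1−t²)^{(d−3)/2} f( w + λ² − 2λ t w^{1/2} ). In particular the risk depends on θ only through λ = ‖θ‖. -/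

import Mathlib

open MeasureTheory Set
open MeasureTheory Measure Set Metric
open scoped ENNReal

lemma lintegral_fun_norm_haar {E : Type*} [NormedAddCommGroup E] [NormedSpace ℝ E]
    [MeasurableSpace E] [BorelSpace E] [FiniteDimensional ℝ E] [Nontrivial E]
    (μ : Measure E) [μ.IsAddHaarMeasure] (g : ℝ → ℝ≥0∞) (hg : Measurable g) :
    ∫⁻ x, g ‖x‖ ∂μ = (Module.finrank ℝ E) * μ (ball 0 1) *
      ∫⁻ y in Ioi (0:ℝ), ENNReal.ofReal (y ^ (Module.finrank ℝ E - 1)) * g y := by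
  have h1 : ∫⁻ x, g ‖x‖ ∂μ = ∫⁻ x : ({(0)}ᶜ : Set E), g ‖x.1‖ ∂(μ.comap (↑)) := by
    rw [lintegral_subtype_comap (measurableSet_singleton (0:E)).compl (fun x => g ‖x‖),
      restrict_compl_singleton]
  have h2 : ∫⁻ x : ({(0)}ᶜ : Set E), g ‖x.1‖ ∂(μ.comap (↑))
      = ∫⁻ p : sphere (0:E) 1 × Ioi (0:ℝ), g p.2.1
          ∂(μ.toSphere.prod (volumeIoiPow (Module.finrank ℝ E - 1))) := by
    rw [← μ.measurePreserving_homeomorphUnitSphereProd.lintegral_comp_emb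
      (Homeomorph.measurableEmbedding _) (fun p => g p.2.1)]
    simp
  have h3 : ∫⁻ p : sphere (0:E) 1 × Ioi (0:ℝ), g p.2.1
        ∂(μ.toSphere.prod (volumeIoiPow (Module.finrank ℝ E - 1)))
      = μ.toSphere univ * ∫⁻ r : Ioi (0:ℝ), g r.1 ∂(volumeIoiPow (Module.finrank ℝ E - 1)) := by
    rw [lintegral_prod (fun p : ↥(sphere (0:E) 1) × ↥(Ioi (0:ℝ)) => g p.2.1)
      ((hg.comp (measurable_subtype_coe.comp measurable_snd)).aemeasurable)]
    simp [lintegral_const, mul_comm]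
  have h4 : ∫⁻ r : Ioi (0:ℝ), g r.1 ∂(volumeIoiPow (Module.finrank ℝ E - 1))
      = ∫⁻ y in Ioi (0:ℝ), ENNReal.ofReal (y ^ (Module.finrank ℝ E - 1)) * g y := by
    rw [volumeIoiPow, lintegral_withDensity_eq_lintegral_mul _
      (show Measurable fun r : ↥(Ioi (0:ℝ)) => ENNReal.ofReal (r.1 ^ (Module.finrank ℝ E - 1)) by fun_prop)
      (show Measurable fun r : ↥(Ioi (0:ℝ)) => g r.1 from hg.comp measurable_subtype_coe)]
    exact lintegral_subtype_comap measurableSet_Ioi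
      (fun y => ENNReal.ofReal (y ^ (Module.finrank ℝ E - 1)) * g y)
  rw [h1, h2, h3, h4, toSphere_apply_univ]

noncomputable def mk2 (a b c d : ℝ) : (ℝ × ℝ) →L[ℝ] (ℝ × ℝ) :=
  ((a • ContinuousLinearMap.fst ℝ ℝ ℝ + b • ContinuousLinearMap.snd ℝ ℝ ℝ).prod
    (c • ContinuousLinearMap.fst ℝ ℝ ℝ + d • ContinuousLinearMap.snd ℝ ℝ ℝ))

lemma mk2_apply (a b c d : ℝ) (p : ℝ × ℝ) :
    mk2 a b c d p = (a * p.1 + b * p.2, c * p.1 + d * p.2) := by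
  simp [mk2, smul_eq_mul]

lemma mk2_det (a b c d : ℝ) : (mk2 a b c d).det = a * d - b * c := by
  have : LinearMap.toMatrix (Module.Basis.finTwoProd ℝ) (Module.Basis.finTwoProd ℝ)
      (mk2 a b c d : (ℝ × ℝ) →ₗ[ℝ] (ℝ × ℝ)) = !![a, b; c, d] := by
    ext i j
    fin_cases i <;> fin_cases j <;>
      simp [LinearMap.toMatrix_apply, mk2_apply]
  rw [ContinuousLinearMap.det, ← LinearMap.det_toMatrix (Module.Basis.finTwoProd ℝ), this,
    Matrix.det_fin_two_of]

noncomputable def Phi (p : ℝ × ℝ) : ℝ × ℝ :=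
  (Real.sqrt p.1 * p.2, Real.sqrt p.1 * Real.sqrt (1 - p.2 ^ 2))

noncomputable def Phi' (p : ℝ × ℝ) : (ℝ × ℝ) →L[ℝ] (ℝ × ℝ) :=
  mk2 (p.2 / (2 * Real.sqrt p.1)) (Real.sqrt p.1)
    (Real.sqrt (1 - p.2 ^ 2) / (2 * Real.sqrt p.1))
    (-(Real.sqrt p.1 * p.2) / Real.sqrt (1 - p.2 ^ 2))

lemma Phi_hasFDerivAt {p : ℝ × ℝ} (hw : 0 < p.1) (ht : p.2 ∈ Ioo (-1:ℝ) 1) :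
    HasFDerivAt Phi (Phi' p) p := by
  obtain ⟨w, t⟩ := p
  simp only [Ioo, mem_setOf_eq] at ht
  have hw' : (0:ℝ) < Real.sqrt w := Real.sqrt_pos.2 hw
  have h1t : (0:ℝ) < 1 - t ^ 2 := by nlinarith [ht.1, ht.2]
  have h1t' : (0:ℝ) < Real.sqrt (1 - t ^ 2) := Real.sqrt_pos.2 h1t
  have hs : HasFDerivAt (fun q : ℝ × ℝ => Real.sqrt q.1)
      ((1 / (2 * Real.sqrt w)) • ContinuousLinearMap.fst ℝ ℝ ℝ) (w, t) :=
    (Real.hasDerivAt_sqrt hw.ne').comp_hasFDerivAt _ (hasFDerivAt_fst)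
  have hq : HasFDerivAt (fun q : ℝ × ℝ => 1 - q.2 ^ 2)
      ((-(2 * t)) • ContinuousLinearMap.snd ℝ ℝ ℝ) (w, t) := by
    have h0 : (fun q : ℝ × ℝ => 1 - q.2 ^ 2) = fun q : ℝ × ℝ => 1 - q.2 * q.2 := by
      funext q; ring
    rw [h0]
    have := ((hasFDerivAt_snd (𝕜 := ℝ) (p := ((w, t) : ℝ × ℝ))).fun_mul
      (hasFDerivAt_snd (𝕜 := ℝ) (p := ((w, t) : ℝ × ℝ)))).const_sub 1
    refine this.congr_fderiv ?_
    refine ContinuousLinearMap.ext fun v => ?_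
    simp [smul_eq_mul]
    ring
  have hs2 : HasFDerivAt (fun q : ℝ × ℝ => Real.sqrt (1 - q.2 ^ 2))
      ((1 / (2 * Real.sqrt (1 - t ^ 2))) • ((-(2 * t)) • ContinuousLinearMap.snd ℝ ℝ ℝ))
      (w, t) :=
    HasDerivAt.comp_hasFDerivAt (x := ((w, t) : ℝ × ℝ)) (hf := hq)
      (Real.hasDerivAt_sqrt h1t.ne')
  have h1 : HasFDerivAt (fun q : ℝ × ℝ => Real.sqrt q.1 * q.2)
      (Real.sqrt w • ContinuousLinearMap.snd ℝ ℝ ℝ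
        + t • ((1 / (2 * Real.sqrt w)) • ContinuousLinearMap.fst ℝ ℝ ℝ)) (w, t) := by
    simpa [mul_comm] using hs.fun_mul (hasFDerivAt_snd (𝕜 := ℝ) (p := ((w, t) : ℝ × ℝ)))
  have h2 : HasFDerivAt (fun q : ℝ × ℝ => Real.sqrt q.1 * Real.sqrt (1 - q.2 ^ 2))
      (Real.sqrt w • ((1 / (2 * Real.sqrt (1 - t ^ 2))) •
          ((-(2 * t)) • ContinuousLinearMap.snd ℝ ℝ ℝ))
        + Real.sqrt (1 - t ^ 2) • ((1 / (2 * Real.sqrt w)) • ContinuousLinearMap.fst ℝ ℝ ℝ))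
      (w, t) := by
    simpa [mul_comm] using hs.fun_mul hs2
  have := h1.prodMk h2
  refine this.congr_fderiv ?_
  apply ContinuousLinearMap.ext
  intro v
  apply Prod.ext <;>
    simp [Phi', mk2, smul_eq_mul] <;> field_simp <;> ring

lemma Phi_fst_sq_add_snd_sq {p : ℝ × ℝ} (hw : 0 < p.1) (ht : p.2 ∈ Ioo (-1:ℝ) 1) :
    (Phi p).1 ^ 2 + (Phi p).2 ^ 2 = p.1 := by
  have h1t : (0:ℝ) ≤ 1 - p.2 ^ 2 := by nlinarith [ht.1, ht.2]
  simp only [Phi, mul_pow, Real.sq_sqrt hw.le, Real.sq_sqrt h1t]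
  ring

lemma Phi_injOn : InjOn Phi (Ioi (0:ℝ) ×ˢ Ioo (-1:ℝ) 1) := by
  rintro ⟨w, t⟩ ⟨hw, ht⟩ ⟨w', t'⟩ ⟨hw', ht'⟩ heq
  have hww : w = w' := by
    have e1 := Phi_fst_sq_add_snd_sq (p := (w, t)) hw ht
    have e2 := Phi_fst_sq_add_snd_sq (p := (w', t')) hw' ht'
    rw [heq] at e1
    exact e1.symm.trans e2
  have hsw : Real.sqrt w ≠ 0 := (Real.sqrt_pos.2 hw).ne'
  have h1 : (Phi (w, t)).1 = (Phi (w', t')).1 := by rw [heq]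
  simp only [Phi] at h1
  have htt : t = t' := by
    rw [← hww] at h1
    exact mul_left_cancel₀ hsw h1
  simp [hww, htt]

lemma Phi_image : Phi '' (Ioi (0:ℝ) ×ˢ Ioo (-1:ℝ) 1) = (univ : Set ℝ) ×ˢ Ioi (0:ℝ) := by
  ext ⟨a, b⟩
  simp only [mem_image, mem_prod, mem_univ, true_and, mem_Ioi, mem_Ioo, Prod.exists]
  constructor
  · rintro ⟨w, t, ⟨hw, ht1, ht2⟩, heq⟩
    have h1t : (0:ℝ) < 1 - t ^ 2 := by nlinarith
    have : (Phi (w, t)).2 = b := by rw [heq]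
    simp only [Phi] at this
    rw [← this]
    exact mul_pos (Real.sqrt_pos.2 hw) (Real.sqrt_pos.2 h1t)
  · intro hb
    have hw : (0:ℝ) < a ^ 2 + b ^ 2 := by nlinarith
    have hsw : (0:ℝ) < Real.sqrt (a ^ 2 + b ^ 2) := Real.sqrt_pos.2 hw
    have hsq : Real.sqrt (a ^ 2 + b ^ 2) ^ 2 = a ^ 2 + b ^ 2 := Real.sq_sqrt hw.le
    have habs : |a| < Real.sqrt (a ^ 2 + b ^ 2) := by
      rw [← Real.sqrt_sq_eq_abs]
      exact Real.sqrt_lt_sqrt (sq_nonneg a) (by nlinarith)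
    obtain ⟨ha1, ha2⟩ := abs_lt.mp habs
    refine ⟨a ^ 2 + b ^ 2, a / Real.sqrt (a ^ 2 + b ^ 2), ⟨hw, ?_, ?_⟩, ?_⟩
    · rw [neg_lt, ← neg_div]
      exact (div_lt_one hsw).2 (by linarith)
    · exact (div_lt_one hsw).2 ha2
    · have key : 1 - (a / Real.sqrt (a ^ 2 + b ^ 2)) ^ 2
          = (b / Real.sqrt (a ^ 2 + b ^ 2)) ^ 2 := by
        rw [div_pow, div_pow, hsq]
        field_simp
        ring
      simp only [Phi, key]
      rw [Real.sqrt_sq_eq_abs, abs_of_pos (div_pos hb hsw)]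
      rw [Prod.mk.injEq]
      constructor <;> field_simp

lemma Phi'_abs_det {q : ℝ × ℝ} (hw : 0 < q.1) (ht : q.2 ∈ Ioo (-1:ℝ) 1) :
    |(Phi' q).det| = 1 / (2 * Real.sqrt (1 - q.2 ^ 2)) := by
  obtain ⟨w, t⟩ := q
  obtain ⟨ht1, ht2⟩ := ht
  simp only at hw ht1 ht2 ⊢
  have h1t : (0:ℝ) < 1 - t ^ 2 := by nlinarith
  have hsw : (0:ℝ) < Real.sqrt w := Real.sqrt_pos.2 hw
  have hst : (0:ℝ) < Real.sqrt (1 - t ^ 2) := Real.sqrt_pos.2 h1t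
  have hu : Real.sqrt (1 - t ^ 2) * Real.sqrt (1 - t ^ 2) = 1 - t ^ 2 :=
    Real.mul_self_sqrt h1t.le
  have hdet : (Phi' (w, t)).det = -(1 / (2 * Real.sqrt (1 - t ^ 2))) := by
    rw [Phi', mk2_det]
    simp only
    field_simp
    linear_combination (-1) * hu
  rw [hdet, abs_neg, abs_of_pos (by positivity)]

lemma lintegral_Phi (g : ℝ × ℝ → ℝ≥0∞) :
    ∫⁻ p in (univ : Set ℝ) ×ˢ Ioi (0:ℝ), g p
      = ∫⁻ q in Ioi (0:ℝ) ×ˢ Ioo (-1:ℝ) 1,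
          ENNReal.ofReal (1 / (2 * Real.sqrt (1 - q.2 ^ 2))) * g (Phi q) := by
  rw [← Phi_image, lintegral_image_eq_lintegral_abs_det_fderiv_mul volume
    (measurableSet_Ioi.prod measurableSet_Ioo)
    (fun q hq => (Phi_hasFDerivAt hq.1 hq.2).hasFDerivWithinAt) Phi_injOn g]
  refine setLIntegral_congr_fun (measurableSet_Ioi.prod measurableSet_Ioo)
    (fun q hq => ?_)
  rw [Phi'_abs_det hq.1 hq.2]
section Key
variable {m : ℕ}

lemma step1 (g : ℝ × ℝ → ℝ≥0∞) :
    ∫⁻ x : EuclideanSpace ℝ (Fin (m+1)), g (‖x‖^2, x 0)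
      = ∫⁻ y : (Fin (m+1) → ℝ), g (∑ i, y i^2, y 0) := by
  rw [← ((EuclideanSpace.volume_preserving_symm_measurableEquiv_toLp (Fin (m+1))).symm _).lintegral_comp_emb
    (MeasurableEquiv.measurableEmbedding _) (fun x : EuclideanSpace ℝ (Fin (m+1)) => g (‖x‖^2, x 0))]
  refine lintegral_congr fun y => ?_
  congr 1
  have h1 : ∀ i, (MeasurableEquiv.toLp 2 (Fin (m+1) → ℝ)).symm.symm y i = y i := fun i => rfl
  have h2 : ‖(MeasurableEquiv.toLp 2 (Fin (m+1) → ℝ)).symm.symm y‖^2 = ∑ i, y i^2 := by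
    rw [EuclideanSpace.norm_eq, Real.sq_sqrt (by positivity)]
    simp [h1]
  rw [h2, h1 0]

lemma step2 (g : ℝ × ℝ → ℝ≥0∞) :
    ∫⁻ y : (Fin (m+1) → ℝ), g (∑ i, y i^2, y 0)
      = ∫⁻ p : ℝ × (Fin m → ℝ), g (p.1^2 + ∑ j, p.2 j^2, p.1) := by
  rw [← ((volume_preserving_piFinSuccAbove (fun _ : Fin (m+1) => ℝ) 0).symm _).lintegral_comp_emb
    (MeasurableEquiv.measurableEmbedding _) (fun y : Fin (m+1) → ℝ => g (∑ i, y i^2, y 0))]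
  refine lintegral_congr fun p => ?_
  have h0 : (MeasurableEquiv.piFinSuccAbove (fun _ : Fin (m+1) => ℝ) 0).symm p
      = Fin.insertNth 0 p.1 p.2 := rfl
  congr 1
  rw [h0]
  have hsum : ∑ i, (Fin.insertNth (0 : Fin (m+1)) p.1 p.2 i)^2
      = p.1^2 + ∑ j, p.2 j^2 := by
    simp [Fin.sum_univ_succ]
  rw [hsum, Fin.insertNth_apply_same]
lemma key (hm : 1 ≤ m) (g : ℝ × ℝ → ℝ≥0∞) (hg : Measurable g) :
    ∫⁻ x : EuclideanSpace ℝ (Fin (m+1)), g (‖x‖^2, x 0)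
      = ((m : ℝ≥0∞) * volume (Metric.ball (0 : EuclideanSpace ℝ (Fin m)) 1))
        * ∫⁻ q in Ioi (0:ℝ) ×ˢ Ioo (-1:ℝ) 1,
            ENNReal.ofReal (1/(2*Real.sqrt (1 - q.2^2)))
              * (ENNReal.ofReal ((Real.sqrt q.1 * Real.sqrt (1 - q.2^2))^(m-1))
                  * g (q.1, Real.sqrt q.1 * q.2)) := by
  haveI : Nontrivial (EuclideanSpace ℝ (Fin m)) :=
    nontrivial_of_ne (EuclideanSpace.single ⟨0, hm⟩ 1) 0 (by
      intro hcon
      have := congrArg (fun z => ‖z‖) hcon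
      simp [EuclideanSpace.norm_single] at this)
  have hCne : (m : ℝ≥0∞) * volume (Metric.ball (0 : EuclideanSpace ℝ (Fin m)) 1) ≠ ⊤ :=
    ENNReal.mul_ne_top (ENNReal.natCast_ne_top m) measure_ball_lt_top.ne
  rw [step1 g, step2 g]
  have hmeas2 : Measurable (fun p : ℝ × (Fin m → ℝ) => g (p.1^2 + ∑ j, p.2 j^2, p.1)) := by
    apply hg.comp
    exact ((measurable_fst.pow_const 2).add
      (Finset.measurable_sum _ fun j _ => ((measurable_pi_apply j).comp measurable_snd).pow_const 2)).prodMk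
      measurable_fst
  have h3 : ∫⁻ p : ℝ × (Fin m → ℝ), g (p.1^2 + ∑ j, p.2 j^2, p.1)
      = ∫⁻ a : ℝ, ∫⁻ z : Fin m → ℝ, g (a^2 + ∑ j, z j^2, a) := by
    rw [volume_eq_prod, lintegral_prod _ hmeas2.aemeasurable]
  rw [h3]
  have inner : ∀ a : ℝ, ∫⁻ z : Fin m → ℝ, g (a^2 + ∑ j, z j^2, a)
      = ((m : ℝ≥0∞) * volume (Metric.ball (0 : EuclideanSpace ℝ (Fin m)) 1))
        * ∫⁻ s in Ioi (0:ℝ), ENNReal.ofReal (s^(m-1)) * g (a^2 + s^2, a) := by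
    intro a
    have e1 : ∫⁻ x : EuclideanSpace ℝ (Fin m), g (a^2 + ‖x‖^2, a)
        = ∫⁻ z : Fin m → ℝ, g (a^2 + ∑ j, z j^2, a) := by
      rw [← (EuclideanSpace.volume_preserving_symm_measurableEquiv_toLp (Fin m)).lintegral_comp_emb
        (MeasurableEquiv.measurableEmbedding _) (fun z : Fin m → ℝ => g (a^2 + ∑ j, z j^2, a))]
      refine lintegral_congr fun x => ?_
      congr 2
      rw [EuclideanSpace.norm_eq, Real.sq_sqrt (by positivity)]
      simp [Real.norm_eq_abs, sq_abs]
    rw [← e1]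
    have e2 : (fun x : EuclideanSpace ℝ (Fin m) => g (a^2 + ‖x‖^2, a))
        = fun x => (fun s : ℝ => g (a^2 + s^2, a)) ‖x‖ := rfl
    rw [e2, lintegral_fun_norm_haar volume (fun s : ℝ => g (a^2 + s^2, a))
      (hg.comp ((measurable_const.add ((measurable_id.pow_const 2))).prodMk measurable_const))]
    rw [finrank_euclideanSpace_fin]
  calc ∫⁻ a : ℝ, ∫⁻ z : Fin m → ℝ, g (a^2 + ∑ j, z j^2, a)
      = ∫⁻ a : ℝ, ((m : ℝ≥0∞) * volume (Metric.ball (0 : EuclideanSpace ℝ (Fin m)) 1))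
          * ∫⁻ s in Ioi (0:ℝ), ENNReal.ofReal (s^(m-1)) * g (a^2 + s^2, a) :=
        lintegral_congr inner
    _ = ((m : ℝ≥0∞) * volume (Metric.ball (0 : EuclideanSpace ℝ (Fin m)) 1))
          * ∫⁻ a : ℝ, ∫⁻ s in Ioi (0:ℝ), ENNReal.ofReal (s^(m-1)) * g (a^2 + s^2, a) :=
        lintegral_const_mul' _ _ hCne
    _ = ((m : ℝ≥0∞) * volume (Metric.ball (0 : EuclideanSpace ℝ (Fin m)) 1))
          * ∫⁻ p in (univ : Set ℝ) ×ˢ Ioi (0:ℝ),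
              (fun p : ℝ × ℝ => ENNReal.ofReal (p.2^(m-1)) * g (p.1^2 + p.2^2, p.1)) p := by
        congr 1
        rw [volume_eq_prod, ← Measure.prod_restrict, Measure.restrict_univ,
          lintegral_prod _ (by
            exact ((ENNReal.measurable_ofReal.comp (measurable_snd.pow_const (m-1))).mul
              (hg.comp (((measurable_fst.pow_const 2).add (measurable_snd.pow_const 2)).prodMk
                measurable_fst))).aemeasurable)]
    _ = _ := by
        rw [lintegral_Phi (fun p : ℝ × ℝ => ENNReal.ofReal (p.2^(m-1)) * g (p.1^2 + p.2^2, p.1))]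
        congr 1
        refine setLIntegral_congr_fun (measurableSet_Ioi.prod measurableSet_Ioo)
          (fun q hq => ?_)
        congr 1
        rw [Phi_fst_sq_add_snd_sq hq.1 hq.2]
        rfl

end Key
open scoped RealInnerProductSpace
noncomputable def PsiFun (ρ f h : ℝ → ℝ) (ω l n p : ℝ) : ℝ :=
  (ω * ρ ((h n - 1)^2 * n) + (1 - ω) * ρ (l^2 + (h n)^2 * n - 2*p*(h n))) * f (n + l^2 - 2*p)

lemma PsiFun_measurable {ρ f h : ℝ → ℝ} (hρ : Measurable ρ) (hf : Measurable f)
    (hh : Measurable h) (ω l : ℝ) :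
    Measurable (fun q : ℝ × ℝ => PsiFun ρ f h ω l q.1 q.2) := by
  unfold PsiFun
  fun_prop

section Rot
variable {m : ℕ}

lemma rotate_lintegral (θ : EuclideanSpace ℝ (Fin (m+1))) (hθ : θ ≠ 0)
    (g : ℝ × ℝ → ℝ≥0∞) :
    ∫⁻ x : EuclideanSpace ℝ (Fin (m+1)), g (‖x‖^2, ⟪θ, x⟫)
      = ∫⁻ x : EuclideanSpace ℝ (Fin (m+1)), g (‖x‖^2, ‖θ‖ * x 0) := by
  have hl : (0:ℝ) < ‖θ‖ := norm_pos_iff.mpr hθ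
  set v : EuclideanSpace ℝ (Fin (m+1)) := ‖θ‖⁻¹ • θ with hvdef
  have hv : ‖v‖ = 1 := by
    rw [hvdef, norm_smul]
    simp [abs_of_pos (inv_pos.2 hl), inv_mul_cancel₀ hl.ne']
  set e0 : EuclideanSpace ℝ (Fin (m+1)) := EuclideanSpace.single (0 : Fin (m+1)) (1:ℝ) with he0def
  have he0 : ‖e0‖ = 1 := by simp [he0def, EuclideanSpace.norm_single]
  set R := Submodule.reflection (ℝ ∙ (v - e0))ᗮ with hRdef
  have hRv : R v = e0 := Submodule.reflection_sub (hv.trans he0.symm)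
  have hinner : ∀ x : EuclideanSpace ℝ (Fin (m+1)), ⟪θ, x⟫ = ‖θ‖ * (R x 0) := by
    intro x
    have hθv : θ = ‖θ‖ • v := by rw [hvdef, smul_inv_smul₀ hl.ne']
    calc ⟪θ, x⟫ = ⟪‖θ‖ • v, x⟫ := by rw [← hθv]
      _ = ‖θ‖ * ⟪v, x⟫ := real_inner_smul_left _ _ _
      _ = ‖θ‖ * ⟪R v, R x⟫ := by rw [LinearIsometryEquiv.inner_map_map]
      _ = ‖θ‖ * ⟪e0, R x⟫ := by rw [hRv]
      _ = ‖θ‖ * (R x 0) := by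
          rw [he0def, EuclideanSpace.inner_single_left]
          simp
  calc ∫⁻ x : EuclideanSpace ℝ (Fin (m+1)), g (‖x‖^2, ⟪θ, x⟫)
      = ∫⁻ x : EuclideanSpace ℝ (Fin (m+1)), g (‖R x‖^2, ‖θ‖ * (R x 0)) := by
        refine lintegral_congr fun x => ?_
        rw [hinner x, R.norm_map]
    _ = ∫⁻ x : EuclideanSpace ℝ (Fin (m+1)), g (‖x‖^2, ‖θ‖ * x 0) :=
        R.measurePreserving.lintegral_comp_emb
          (R.toHomeomorph.measurableEmbedding) (fun y => g (‖y‖^2, ‖θ‖ * y 0))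
end Rot
lemma const_id (m : ℕ) (hm : 1 ≤ m) {w t : ℝ} (hw : 0 < w) (ht1 : -1 < t) (ht2 : t < 1) :
    (m : ℝ) * (Real.sqrt Real.pi ^ m / Real.Gamma ((m:ℝ)/2 + 1)) * (1/(2*Real.sqrt (1 - t^2)))
      * (Real.sqrt w * Real.sqrt (1 - t^2))^(m-1)
    = Real.pi ^ ((m:ℝ)/2) / Real.Gamma ((m:ℝ)/2)
        * (w ^ (((m:ℝ)-1)/2) * (1-t^2) ^ (((m:ℝ)-2)/2)) := by
  have h1t : (0:ℝ) < 1 - t^2 := by nlinarith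
  have hs : (0:ℝ) < Real.sqrt (1 - t^2) := Real.sqrt_pos.2 h1t
  have hm0 : (0:ℝ) < (m:ℝ) := by exact_mod_cast hm
  have hΓpos : 0 < Real.Gamma ((m:ℝ)/2) := Real.Gamma_pos_of_pos (by positivity)
  have hΓ1 : Real.Gamma ((m:ℝ)/2 + 1) = ((m:ℝ)/2) * Real.Gamma ((m:ℝ)/2) :=
    Real.Gamma_add_one (by positivity)
  have hcast : ((m - 1 : ℕ) : ℝ) = (m:ℝ) - 1 := by
    rw [Nat.cast_sub hm]; norm_num
  have hrpow : ∀ x : ℝ, 0 < x → Real.sqrt x ^ (m-1) = x ^ (((m:ℝ)-1)/2) := by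
    intro x hx
    rw [Real.sqrt_eq_rpow, ← Real.rpow_natCast (x ^ ((1:ℝ)/2)) (m-1),
      ← Real.rpow_mul hx.le, hcast]
    ring_nf
  have hpi : Real.sqrt Real.pi ^ m = Real.pi ^ ((m:ℝ)/2) := by
    rw [Real.sqrt_eq_rpow, ← Real.rpow_natCast (Real.pi ^ ((1:ℝ)/2)) m,
      ← Real.rpow_mul Real.pi_pos.le]
    ring_nf
  have hsplit : (1-t^2) ^ (((m:ℝ)-1)/2)
      = (1-t^2) ^ (((m:ℝ)-2)/2) * Real.sqrt (1-t^2) := by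
    rw [Real.sqrt_eq_rpow, ← Real.rpow_add h1t]
    ring_nf
  rw [mul_pow, hrpow w hw, hrpow _ h1t, hpi, hΓ1, hsplit]
  have hpow : (0:ℝ) < Real.pi ^ ((m:ℝ)/2) := Real.rpow_pos_of_pos Real.pi_pos _
  field_simp
set_option maxHeartbeats 1000000

/-- Dimension reduction of the balanced risk for orthogonally equivariant
estimators `δ(x) = h(‖x‖²)x` under a spherically symmetric model: the risk equals a double
integral against the joint density `ψ(t,w)` of `T = (θ·X)/(λ‖X‖)` and `W = ‖X‖²`, and hence
depends on `θ` only through `λ = ‖θ‖`. -/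
theorem stmt19 (d : ℕ) (hd : 2 ≤ d) (θ : EuclideanSpace ℝ (Fin d)) (hθ : θ ≠ 0)
    (f : ℝ → ℝ) (hf_meas : Measurable f) (hf_nonneg : ∀ t, 0 ≤ t → 0 ≤ f t)
    (hf_prob : (∫ x : EuclideanSpace ℝ (Fin d), f (‖x‖ ^ 2)) = 1)
    (ρ : ℝ → ℝ) (hρ_meas : Measurable ρ) (hρ_nonneg : ∀ t, 0 ≤ t → 0 ≤ ρ t)
    (ω : ℝ) (hω0 : 0 ≤ ω) (hω1 : ω < 1)
    (h : ℝ → ℝ) (hh_meas : Measurable h)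
    (hrisk : Integrable (fun x : EuclideanSpace ℝ (Fin d) =>
      (ω * ρ (‖h (‖x‖ ^ 2) • x - x‖ ^ 2) + (1 - ω) * ρ (‖h (‖x‖ ^ 2) • x - θ‖ ^ 2))
        * f (‖x - θ‖ ^ 2))) :
    (∫ x : EuclideanSpace ℝ (Fin d),
        (ω * ρ (‖h (‖x‖ ^ 2) • x - x‖ ^ 2) + (1 - ω) * ρ (‖h (‖x‖ ^ 2) • x - θ‖ ^ 2))
          * f (‖x - θ‖ ^ 2))
      = ∫ w in Ioi (0 : ℝ), ∫ t in Ioo (-1 : ℝ) 1,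
          (ω * ρ ((h w - 1) ^ 2 * w)
            + (1 - ω) * ρ (‖θ‖ ^ 2 + (h w) ^ 2 * w - 2 * ‖θ‖ * t * Real.sqrt w * h w))
          * (Real.pi ^ (((d : ℝ) - 1) / 2) / Real.Gamma (((d : ℝ) - 1) / 2)
              * w ^ ((d : ℝ) / 2 - 1) * (1 - t ^ 2) ^ (((d : ℝ) - 3) / 2)
              * f (w + ‖θ‖ ^ 2 - 2 * ‖θ‖ * t * Real.sqrt w)) := by
  obtain ⟨m, rfl⟩ : ∃ m, d = m + 1 := ⟨d - 1, by omega⟩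
  have hm : 1 ≤ m := by omega
  have hl : (0:ℝ) < ‖θ‖ := norm_pos_iff.mpr hθ
  set F : EuclideanSpace ℝ (Fin (m+1)) → ℝ := fun x =>
    (ω * ρ (‖h (‖x‖ ^ 2) • x - x‖ ^ 2) + (1 - ω) * ρ (‖h (‖x‖ ^ 2) • x - θ‖ ^ 2))
      * f (‖x - θ‖ ^ 2) with hFdef
  set r : ℝ → ℝ → ℝ := fun w t =>
    (ω * ρ ((h w - 1) ^ 2 * w)
      + (1 - ω) * ρ (‖θ‖ ^ 2 + (h w) ^ 2 * w - 2 * ‖θ‖ * t * Real.sqrt w * h w))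
    * (Real.pi ^ ((((m+1:ℕ) : ℝ) - 1) / 2) / Real.Gamma ((((m+1:ℕ) : ℝ) - 1) / 2)
        * w ^ (((m+1:ℕ) : ℝ) / 2 - 1) * (1 - t ^ 2) ^ ((((m+1:ℕ) : ℝ) - 3) / 2)
        * f (w + ‖θ‖ ^ 2 - 2 * ‖θ‖ * t * Real.sqrt w)) with hrdef
  -- pointwise identification of the LHS integrand
  have hF_eq : ∀ x : EuclideanSpace ℝ (Fin (m+1)),
      F x = PsiFun ρ f h ω ‖θ‖ (‖x‖^2) ⟪θ, x⟫ := by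
    intro x
    have b1 : ‖h (‖x‖^2) • x - x‖^2 = (h (‖x‖^2) - 1)^2 * ‖x‖^2 := by
      rw [show h (‖x‖^2) • x - x = (h (‖x‖^2) - 1) • x from by rw [sub_smul, one_smul],
        norm_smul, mul_pow, Real.norm_eq_abs, sq_abs]
    have b2 : ‖h (‖x‖^2) • x - θ‖^2
        = ‖θ‖^2 + (h (‖x‖^2))^2 * ‖x‖^2 - 2*⟪θ, x⟫*(h (‖x‖^2)) := by
      rw [norm_sub_sq_real, norm_smul, real_inner_smul_left, real_inner_comm x θ,
        Real.norm_eq_abs, mul_pow, sq_abs]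
      ring
    have b3 : ‖x - θ‖^2 = ‖x‖^2 + ‖θ‖^2 - 2*⟪θ, x⟫ := by
      rw [norm_sub_sq_real, real_inner_comm x θ]
      ring
    rw [hFdef]
    simp only
    rw [b1, b2, b3, PsiFun]
  have hFnonneg : ∀ x, 0 ≤ F x := by
    intro x
    rw [hFdef]
    exact mul_nonneg (add_nonneg (mul_nonneg hω0 (hρ_nonneg _ (by positivity)))
      (mul_nonneg (by linarith) (hρ_nonneg _ (by positivity)))) (hf_nonneg _ (by positivity))
  -- measurability
  have hΨu : Measurable (fun q : ℝ × ℝ => PsiFun ρ f h ω ‖θ‖ q.1 q.2) :=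
    PsiFun_measurable hρ_meas hf_meas hh_meas ω ‖θ‖
  set g : ℝ × ℝ → ℝ≥0∞ :=
    fun q => ENNReal.ofReal (PsiFun ρ f h ω ‖θ‖ q.1 (‖θ‖ * q.2)) with hgdef
  have hgmeas : Measurable g := by
    apply ENNReal.measurable_ofReal.comp
    exact hΨu.comp (measurable_fst.prodMk (measurable_snd.const_mul ‖θ‖))
  have hrmeas : Measurable (fun q : ℝ × ℝ => r q.1 q.2) := by
    rw [hrdef]
    fun_prop
  have hrnonneg : ∀ w ∈ Ioi (0:ℝ), ∀ t ∈ Ioo (-1:ℝ) 1, 0 ≤ r w t := by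
    intro w hw t ht
    rw [mem_Ioi] at hw
    obtain ⟨ht1, ht2⟩ := ht
    have h1t : (0:ℝ) ≤ 1 - t^2 := by nlinarith
    have hsq : Real.sqrt w ^ 2 = w := Real.sq_sqrt hw.le
    have harg2 : 0 ≤ ‖θ‖^2 + (h w)^2 * w - 2 * ‖θ‖ * t * Real.sqrt w * h w := by
      nlinarith [sq_nonneg (‖θ‖ - t * Real.sqrt w * h w),
        mul_nonneg (sq_nonneg (Real.sqrt w * h w)) h1t]
    have hargf : 0 ≤ w + ‖θ‖^2 - 2 * ‖θ‖ * t * Real.sqrt w := by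
      nlinarith [sq_nonneg (Real.sqrt w - ‖θ‖ * t), mul_nonneg (sq_nonneg ‖θ‖) h1t]
    have hargΓ : (0:ℝ) < (((m+1:ℕ) : ℝ) - 1)/2 := by
      have : (1:ℝ) ≤ (m:ℝ) := by exact_mod_cast hm
      push_cast
      linarith
    rw [hrdef]
    refine mul_nonneg (add_nonneg (mul_nonneg hω0 (hρ_nonneg _ (by positivity)))
      (mul_nonneg (by linarith) (hρ_nonneg _ harg2))) ?_
    refine mul_nonneg (mul_nonneg (mul_nonneg (div_nonneg
      (Real.rpow_nonneg Real.pi_pos.le _) (Real.Gamma_pos_of_pos hargΓ).le)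
      (Real.rpow_nonneg hw.le _)) (Real.rpow_nonneg h1t _)) (hf_nonneg _ hargf)
  -- the main lintegral identity
  have hT : ∫⁻ w in Ioi (0:ℝ), ∫⁻ t in Ioo (-1:ℝ) 1, ENNReal.ofReal (r w t)
      = ∫⁻ x, ENNReal.ofReal (F x) := by
    have hchain : ∫⁻ x, ENNReal.ofReal (F x)
        = ((m:ℝ≥0∞) * volume (Metric.ball (0 : EuclideanSpace ℝ (Fin m)) 1))
          * ∫⁻ q in Ioi (0:ℝ) ×ˢ Ioo (-1:ℝ) 1,
              ENNReal.ofReal (1/(2*Real.sqrt (1 - q.2^2)))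
                * (ENNReal.ofReal ((Real.sqrt q.1 * Real.sqrt (1 - q.2^2))^(m-1))
                    * g (q.1, Real.sqrt q.1 * q.2)) := by
      calc ∫⁻ x, ENNReal.ofReal (F x)
          = ∫⁻ x : EuclideanSpace ℝ (Fin (m+1)),
              (fun q : ℝ×ℝ => ENNReal.ofReal (PsiFun ρ f h ω ‖θ‖ q.1 q.2)) (‖x‖^2, ⟪θ, x⟫) :=
            lintegral_congr fun x => by rw [hF_eq x]
        _ = ∫⁻ x : EuclideanSpace ℝ (Fin (m+1)),
              (fun q : ℝ×ℝ => ENNReal.ofReal (PsiFun ρ f h ω ‖θ‖ q.1 q.2)) (‖x‖^2, ‖θ‖ * x 0) :=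
            rotate_lintegral θ hθ (fun q : ℝ×ℝ => ENNReal.ofReal (PsiFun ρ f h ω ‖θ‖ q.1 q.2))
        _ = ∫⁻ x : EuclideanSpace ℝ (Fin (m+1)), g (‖x‖^2, x 0) := lintegral_congr fun x => rfl
        _ = _ := key hm g hgmeas
    have hC : ((m:ℝ≥0∞) * volume (Metric.ball (0 : EuclideanSpace ℝ (Fin m)) 1))
        = ENNReal.ofReal ((m:ℝ) * (Real.sqrt Real.pi ^ m / Real.Gamma ((m:ℝ)/2 + 1))) := by
      haveI : Nonempty (Fin m) := ⟨⟨0, hm⟩⟩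
      have hΓpos : 0 < Real.Gamma ((m:ℝ)/2 + 1) := Real.Gamma_pos_of_pos (by positivity)
      rw [EuclideanSpace.volume_ball, Fintype.card_fin, ENNReal.ofReal_one, one_pow, one_mul,
        ENNReal.ofReal_mul (by positivity), ENNReal.ofReal_natCast]
    have hpoint : ∀ q ∈ Ioi (0:ℝ) ×ˢ Ioo (-1:ℝ) 1,
        ENNReal.ofReal ((m:ℝ) * (Real.sqrt Real.pi ^ m / Real.Gamma ((m:ℝ)/2 + 1)))
          * (ENNReal.ofReal (1/(2*Real.sqrt (1 - q.2^2)))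
            * (ENNReal.ofReal ((Real.sqrt q.1 * Real.sqrt (1 - q.2^2))^(m-1))
                * g (q.1, Real.sqrt q.1 * q.2)))
          = ENNReal.ofReal (r q.1 q.2) := by
      rintro ⟨w, t⟩ ⟨hw, ht⟩
      rw [mem_Ioi] at hw
      obtain ⟨ht1, ht2⟩ := ht
      have hΓpos : 0 < Real.Gamma ((m:ℝ)/2 + 1) := Real.Gamma_pos_of_pos (by positivity)
      have h1t : (0:ℝ) < 1 - t^2 := by nlinarith
      rw [hgdef]
      simp only
      rw [← ENNReal.ofReal_mul (by positivity),
        ← ENNReal.ofReal_mul (by positivity),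
        ← ENNReal.ofReal_mul (by positivity)]
      congr 1
      have CI := const_id m hm hw ht1 ht2
      rw [hrdef, PsiFun]
      simp only
      have ecast1 : ((((m+1:ℕ)) : ℝ) - 1)/2 = (m:ℝ)/2 := by push_cast; ring
      have ecast2 : (((m+1:ℕ)) : ℝ)/2 - 1 = ((m:ℝ)-1)/2 := by push_cast; ring
      have ecast3 : ((((m+1:ℕ)) : ℝ) - 3)/2 = ((m:ℝ)-2)/2 := by push_cast; ring
      rw [ecast1, ecast2, ecast3]
      have earg1 : ‖θ‖^2 + (h w)^2*w - 2*(‖θ‖*(Real.sqrt w*t))*(h w)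
          = ‖θ‖^2 + (h w)^2*w - 2*‖θ‖*t*Real.sqrt w*h w := by ring
      have earg2 : w + ‖θ‖^2 - 2*(‖θ‖*(Real.sqrt w*t))
          = w + ‖θ‖^2 - 2*‖θ‖*t*Real.sqrt w := by ring
      rw [earg1, earg2]
      linear_combination ((ω * ρ ((h w - 1)^2*w)
        + (1-ω) * ρ (‖θ‖^2 + (h w)^2*w - 2*‖θ‖*t*Real.sqrt w*h w))
        * f (w + ‖θ‖^2 - 2*‖θ‖*t*Real.sqrt w)) * CI
    have hmain : ∫⁻ x, ENNReal.ofReal (F x)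
        = ∫⁻ q in Ioi (0:ℝ) ×ˢ Ioo (-1:ℝ) 1, ENNReal.ofReal (r q.1 q.2) := by
      rw [hchain, hC, ← lintegral_const_mul' _ _ ENNReal.ofReal_ne_top]
      exact setLIntegral_congr_fun (measurableSet_Ioi.prod measurableSet_Ioo)
        hpoint
    have hsplit : ∫⁻ q in Ioi (0:ℝ) ×ˢ Ioo (-1:ℝ) 1, ENNReal.ofReal (r q.1 q.2)
        = ∫⁻ w in Ioi (0:ℝ), ∫⁻ t in Ioo (-1:ℝ) 1, ENNReal.ofReal (r w t) := by
      have hmeas' : Measurable (fun q : ℝ×ℝ => ENNReal.ofReal (r q.1 q.2)) :=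
        ENNReal.measurable_ofReal.comp hrmeas
      rw [volume_eq_prod, ← Measure.prod_restrict,
        lintegral_prod (fun q : ℝ×ℝ => ENNReal.ofReal (r q.1 q.2)) hmeas'.aemeasurable]
    rw [← hsplit, hmain]
  -- finiteness
  have hKfin : (∫⁻ x, ENNReal.ofReal (F x)) ≠ ⊤ := by
    refine (lt_of_le_of_lt (lintegral_mono fun x => Real.ofReal_le_enorm (F x)) ?_).ne
    exact hrisk.2
  -- define J
  set J : ℝ → ℝ≥0∞ := fun w => ∫⁻ t in Ioo (-1:ℝ) 1, ENNReal.ofReal (r w t) with hJdef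
  have hJmeas : Measurable J := by
    apply Measurable.lintegral_prod_right (f := fun w t => ENNReal.ofReal (r w t))
    exact ENNReal.measurable_ofReal.comp hrmeas
  have hJfin : ∀ᵐ w ∂(volume.restrict (Ioi (0:ℝ))), J w ≠ ⊤ := by
    have : ∫⁻ w in Ioi (0:ℝ), J w ≠ ⊤ := by rw [hJdef]; rw [hT]; exact hKfin
    exact (ae_lt_top hJmeas this).mono fun w hw => hw.ne
  -- LHS conversion
  have hLHS : ∫ x, F x = (∫⁻ x, ENNReal.ofReal (F x)).toReal :=
    integral_eq_lintegral_of_nonneg_ae (Filter.Eventually.of_forall hFnonneg)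
      hrisk.aestronglyMeasurable
  -- inner RHS conversion
  have hInner : ∀ w ∈ Ioi (0:ℝ), ∫ t in Ioo (-1:ℝ) 1, r w t = (J w).toReal := by
    intro w hw
    rw [hJdef]
    refine integral_eq_lintegral_of_nonneg_ae ?_ ?_
    · filter_upwards [ae_restrict_mem measurableSet_Ioo] with t ht
      exact hrnonneg w hw t ht
    · exact (hrmeas.comp (measurable_const.prodMk measurable_id)).aestronglyMeasurable
  -- outer RHS conversion
  have hOuter : ∫ w in Ioi (0:ℝ), (J w).toReal = (∫⁻ w in Ioi (0:ℝ), J w).toReal := by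
    rw [integral_eq_lintegral_of_nonneg_ae
      (Filter.Eventually.of_forall fun w => ENNReal.toReal_nonneg)
      (hJmeas.ennreal_toReal.aestronglyMeasurable)]
    congr 1
    refine lintegral_congr_ae ?_
    filter_upwards [hJfin] with w hw
    rw [ENNReal.ofReal_toReal hw]
  calc ∫ x, F x = (∫⁻ x, ENNReal.ofReal (F x)).toReal := hLHS
    _ = (∫⁻ w in Ioi (0:ℝ), J w).toReal := by rw [hJdef, hT]
    _ = ∫ w in Ioi (0:ℝ), (J w).toReal := hOuter.symm
    _ = ∫ w in Ioi (0:ℝ), ∫ t in Ioo (-1:ℝ) 1, r w t := by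
        refine (setIntegral_congr_fun measurableSet_Ioi fun w hw => ?_).symm
        exact hInner w hw
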